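/- If φ has the focal property for (p, q) on Y compact, then φ⁻¹ has the focal property for (q, p). -/

import Mathlib

open Function Filter Topology
open scoped Manifold

/-- Pullback of a 1-form `α` on a manifold along a smooth map `φ`. -/
noncomputable def pullbackOneForm
    {E : Type*} [NormedAddCommGroup E] [NormedSpace ℝ E]
    {H : Type*} [TopologicalSpace H] (I : ModelWithCorners ℝ E H)
    {M : Type*} [TopologicalSpace M] [ChartedSpace H M]
    (φ : M → M) (α : ∀ x : M, TangentSpace I x →L[ℝ] ℝ) (x : M) :
    TangentSpace I x →L[ℝ] ℝ :=
  (α (φ x)).comp (mfderiv I I φ x)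

/-- The focal property for `(p, q)` of a contactomorphism with scaling
factor `g`. -/
def FocalProperty {M : Type*} [TopologicalSpace M]
    (φ : M → M) (g : M → ℝ) (p q : M) : Prop :=
  φ p = p ∧ φ q = q ∧ 0 < g p ∧ g q < 0 ∧
  (∀ U ∈ 𝓝 q, ∃ V ∈ 𝓝 q, IsOpen V ∧ V ⊆ U ∧ Set.MapsTo φ V V) ∧
  (∀ z, z ≠ p → Tendsto (fun k => φ^[k] z) atTop (𝓝 q))

/-- If a contactomorphism `φ` of a compact contact manifold has the focal
property for `(p, q)`, then its inverse `φ⁻¹` (whose scaling factor is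
`−g ∘ φ⁻¹`) has the focal property for `(q, p)`. -/
theorem stmt_11
    {E : Type*} [NormedAddCommGroup E] [NormedSpace ℝ E]
    {H : Type*} [TopologicalSpace H] (I : ModelWithCorners ℝ E H)
    {M : Type*} [TopologicalSpace M] [ChartedSpace H M]
    [IsManifold I (⊤ : ℕ∞) M] [CompactSpace M]
    (α : ∀ x : M, TangentSpace I x →L[ℝ] ℝ)
    (φ φinv : M → M) (hφ : ContMDiff I I (⊤ : ℕ∞) φ) (hφinv : ContMDiff I I (⊤ : ℕ∞) φinv)
    (hleft : LeftInverse φinv φ) (hright : RightInverse φinv φ)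
    (g : M → ℝ) (hg : ContMDiff I 𝓘(ℝ, ℝ) (⊤ : ℕ∞) g)
    (hscal : ∀ x, pullbackOneForm I φ α x = Real.exp (g x) • α x)
    (p q : M) (hfocal : FocalProperty φ g p q) :
    FocalProperty φinv (fun y => -g (φinv y)) q p := by
  obtain ⟨hp, hq, hgp, hgq, hnbhd, horb⟩ := hfocal
  have hcont : Continuous φ := hφ.continuous
  have hcontinv : Continuous φinv := hφinv.continuous
  have hgc : Continuous g := hg.continuous
  have hfixq : φinv q = q := by have := hleft q; rwa [hq] at this
  have hfixp : φinv p = p := by have := hleft p; rwa [hp] at this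
  -- A weak T1-type separation lemma, via the extended charts.
  have t1 : ∀ x y : M, x ≠ y → ∃ O : Set M, IsOpen O ∧ y ∈ O ∧ x ∉ O := by
    intro x y hxy
    by_cases hx : x ∈ (extChartAt I y).source
    · refine ⟨(extChartAt I y).source ∩ extChartAt I y ⁻¹' ({extChartAt I y x}ᶜ), ?_, ?_, ?_⟩
      · exact (continuousOn_extChartAt y).isOpen_inter_preimage
          (isOpen_extChartAt_source y) isOpen_compl_singleton
      · refine ⟨mem_extChartAt_source y, ?_⟩
        simp only [Set.mem_preimage, Set.mem_compl_iff, Set.mem_singleton_iff]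
        intro h
        exact hxy ((extChartAt I y).injOn hx (mem_extChartAt_source y) h.symm)
      · intro h
        exact h.2 rfl
    · exact ⟨(extChartAt I y).source, isOpen_extChartAt_source y,
        mem_extChartAt_source y, hx⟩
  -- The uniform attraction lemma.
  have L1 : ∀ W : Set M, IsOpen W → p ∈ W → ∀ V : Set M, IsOpen V → q ∈ V →
      Set.MapsTo φ V V → ∃ N : ℕ, ∀ z, z ∉ V → ∀ k, N ≤ k → φinv^[k] z ∈ W := by
    intro W hWo hWp V hVo hVq hVm
    have hVit : ∀ n : ℕ, Set.MapsTo (φ^[n]) V V := fun n => hVm.iterate n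
    have hKc : IsCompact ((W ∪ V)ᶜ) := ((hWo.union hVo).isClosed_compl).isCompact
    have hcov : (W ∪ V)ᶜ ⊆ ⋃ n : ℕ, (φ^[n]) ⁻¹' V := by
      intro y hy
      have hyp : y ≠ p := fun h => hy (Or.inl (h ▸ hWp))
      have hev : ∀ᶠ k in atTop, φ^[k] y ∈ V :=
        (horb y hyp).eventually_mem (hVo.mem_nhds hVq)
      obtain ⟨n, hn⟩ := hev.exists
      exact Set.mem_iUnion.2 ⟨n, hn⟩
    obtain ⟨t, ht⟩ := hKc.elim_finite_subcover (fun n : ℕ => (φ^[n]) ⁻¹' V)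
      (fun n => hVo.preimage (hcont.iterate n)) hcov
    refine ⟨t.sup id, ?_⟩
    have hKstep : ∀ y, y ∉ W ∪ V → (φ^[t.sup id]) y ∈ V := by
      intro y hy
      obtain ⟨n, hnt, hn⟩ := Set.mem_iUnion₂.1 (ht hy)
      have hnle : n ≤ t.sup id := Finset.le_sup (f := id) hnt
      have hsplit : t.sup id - n + n = t.sup id := by omega
      have heq : (φ^[t.sup id]) y = (φ^[t.sup id - n]) ((φ^[n]) y) := by
        rw [← Function.iterate_add_apply, hsplit]
      rw [heq]
      exact hVit _ hn
    intro z hzV k hk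
    by_contra hzw
    have hw : φinv^[k] z ∉ W ∪ V := by
      rintro (h | h)
      · exact hzw h
      · have hzz : (φ^[k]) (φinv^[k] z) ∈ V := hVit k h
        rw [(hright.iterate k) z] at hzz
        exact hzV hzz
    have h1 : (φ^[t.sup id]) (φinv^[k] z) ∈ V := hKstep _ hw
    have h2 : φinv^[k] z = φinv^[t.sup id] (φinv^[k - t.sup id] z) := by
      rw [← Function.iterate_add_apply]
      congr 1
      omega
    rw [h2, (hright.iterate (t.sup id)) _] at h1
    have h3 : (φ^[k - t.sup id]) (φinv^[k - t.sup id] z) ∈ V := hVit _ h1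
    rw [(hright.iterate _) z] at h3
    exact hzV h3
  refine ⟨hfixq, hfixp, ?_, ?_, ?_, ?_⟩
  · simp only [hfixq]; linarith
  · simp only [hfixp]; linarith
  · -- invariant neighbourhoods of p for φinv
    intro U hU
    have hWo : IsOpen (interior U) := isOpen_interior
    have hWp : p ∈ interior U := mem_interior_iff_mem_nhds.2 hU
    have hq0 : q ∈ g ⁻¹' (Set.Iio (0 : ℝ)) := by
      simp only [Set.mem_preimage, Set.mem_Iio]; exact hgq
    obtain ⟨V, hVn, hVo, hVsub, hVm⟩ := hnbhd (g ⁻¹' (Set.Iio 0))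
      ((isOpen_Iio.preimage hgc).mem_nhds hq0)
    have hVq : q ∈ V := mem_of_mem_nhds hVn
    obtain ⟨N₀, hN⟩ := L1 (interior U) hWo hWp V hVo hVq hVm
    have hpcl : p ∉ closure V := by
      have hsub : closure V ⊆ g ⁻¹' (Set.Iic (0 : ℝ)) := by
        apply closure_minimal
        · intro x hx
          have hxx := hVsub hx
          simp only [Set.mem_preimage, Set.mem_Iio] at hxx
          simp only [Set.mem_preimage, Set.mem_Iic]
          exact le_of_lt hxx
        · exact isClosed_Iic.preimage hgc
      intro hcl
      have hpp := hsub hcl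
      simp only [Set.mem_preimage, Set.mem_Iic] at hpp
      linarith
    refine ⟨(⋂ k ∈ Finset.range (N₀ + 1), φinv^[k] ⁻¹' (interior U)) ∩ (closure V)ᶜ,
      ?_, ?_, ?_, ?_⟩
    · refine IsOpen.mem_nhds ?_ ?_
      · exact (isOpen_biInter_finset fun k _ => hWo.preimage (hcontinv.iterate k)).inter
          isClosed_closure.isOpen_compl
      · refine ⟨Set.mem_iInter₂.2 fun k _ => ?_, hpcl⟩
        simp only [Set.mem_preimage, Function.iterate_fixed hfixp k]
        exact hWp
    · exact (isOpen_biInter_finset fun k _ => hWo.preimage (hcontinv.iterate k)).inter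
        isClosed_closure.isOpen_compl
    · intro x hx
      have h0 := Set.mem_iInter₂.1 hx.1 0 (Finset.mem_range.2 (Nat.succ_pos N₀))
      simp only [Set.mem_preimage, Function.iterate_zero_apply] at h0
      exact interior_subset h0
    · intro x hx
      have hx1 := Set.mem_iInter₂.1 hx.1
      have hxV : x ∉ V := fun h => hx.2 (subset_closure h)
      refine ⟨Set.mem_iInter₂.2 fun k hk => ?_, ?_⟩
      · simp only [Set.mem_preimage, ← Function.iterate_succ_apply]
        by_cases hlt : k + 1 < N₀ + 1
        · have := hx1 (k + 1) (Finset.mem_range.2 hlt)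
          simpa using this
        · exact hN x hxV (k + 1) (by omega)
      · intro hmem
        have hxcl : x ∈ closure V := by
          have h1 : φ (φinv x) = x := hright x
          have h2 : φ '' closure V ⊆ closure V :=
            (image_closure_subset_closure_image hcont).trans
              (closure_mono (Set.mapsTo_iff_image_subset.1 hVm))
          exact h1 ▸ h2 ⟨φinv x, hmem, rfl⟩
        exact hx.2 hxcl
  · -- all backward orbits converge to p
    intro z hz
    rw [tendsto_nhds]
    intro s hso hsp
    obtain ⟨O, hOo, hOq, hzO⟩ := t1 z q hz
    obtain ⟨V, hVn, hVo, hVsub, hVm⟩ := hnbhd O (hOo.mem_nhds hOq)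
    have hVq : q ∈ V := mem_of_mem_nhds hVn
    obtain ⟨N, hN⟩ := L1 s hso hsp V hVo hVq hVm
    exact Filter.eventually_atTop.2 ⟨N, fun k hk => hN z (fun h => hzO (hVsub h)) k hk⟩
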